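/- Every Y ∈ W_{1,A}^n[0,1] is recovered from its last component and its initial values: for every i < n and every x ∈ [0,1], Y_i(x) = Σ_{j=0}^{n−1} M_{ij}(x) · ( Y_j(0) + ∫₀ˣ A_{n−1,n}(t) (M(t)⁻¹)_{j,n−1} Y_n(t) dt ). -/

import Mathlib

open MeasureTheory Set
noncomputable section

lemma diag_ae {μ : Measure ℝ} [SFinite μ] [NullSingletonClass μ] :
    ∀ᵐ p : ℝ × ℝ ∂(μ.prod μ), p.1 ≠ p.2 := by
  have hD : MeasurableSet {p : ℝ × ℝ | p.1 = p.2} :=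
    measurableSet_eq_fun measurable_fst measurable_snd
  have h0 : (μ.prod μ) {p : ℝ × ℝ | p.1 = p.2} = 0 := by
    rw [Measure.prod_apply hD]
    have : ∀ x : ℝ, μ (Prod.mk x ⁻¹' {p : ℝ × ℝ | p.1 = p.2}) = 0 := by
      intro x
      have : Prod.mk x ⁻¹' {p : ℝ × ℝ | p.1 = p.2} = {x} := by
        ext y; simp [eq_comm]
      rw [this]; exact measure_singleton x
    simp [this]
  filter_upwards [measure_eq_zero_iff_ae_notMem.mp h0] with p hp using hp

/-- Integration by parts for indefinite integrals of L¹ functions. -/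
lemma ibp {𝕜 : Type*} [RCLike 𝕜] {f g : ℝ → 𝕜} {x : ℝ} (hx : 0 ≤ x)
    (hf : IntegrableOn f (Ioc 0 x)) (hg : IntegrableOn g (Ioc 0 x)) (a b : 𝕜) :
    ∫ t in (0:ℝ)..x, ((a + ∫ s in (0:ℝ)..t, f s) * g t + f t * (b + ∫ s in (0:ℝ)..t, g s))
      = (a + ∫ s in (0:ℝ)..x, f s) * (b + ∫ s in (0:ℝ)..x, g s) - a * b := by
  set μ := volume.restrict (Ioc (0:ℝ) x) with hμ
  have hI : ∀ h : ℝ → 𝕜, ∀ t ∈ Ioc (0:ℝ) x,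
      (∫ s in (0:ℝ)..t, h s) = ∫ s, (Iic t).indicator h s ∂μ := by
    intro h t ht
    rw [intervalIntegral.integral_of_le ht.1.le, hμ, integral_indicator measurableSet_Iic,
      Measure.restrict_restrict measurableSet_Iic, inter_comm, Ioc_inter_Iic,
      min_eq_right ht.2]
  have hS : MeasurableSet {p : ℝ × ℝ | p.2 ≤ p.1} := measurableSet_le measurable_snd measurable_fst
  have hS' : MeasurableSet {p : ℝ × ℝ | p.1 ≤ p.2} := measurableSet_le measurable_fst measurable_snd
  have hfg : Integrable (fun p : ℝ × ℝ => f p.1 * g p.2) (μ.prod μ) := hf.mul_prod hg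
  have hgf : Integrable (fun p : ℝ × ℝ => f p.2 * g p.1) (μ.prod μ) := by
    have := (hg.mul_prod hf : Integrable (fun p : ℝ × ℝ => g p.1 * f p.2) (μ.prod μ))
    simpa [mul_comm] using this
  have h1 : Integrable (fun p : ℝ × ℝ => {p : ℝ × ℝ | p.2 ≤ p.1}.indicator
      (fun q => f q.2 * g q.1) p) (μ.prod μ) := hgf.indicator hS
  have h2 : Integrable (fun p : ℝ × ℝ => {p : ℝ × ℝ | p.2 ≤ p.1}.indicator
      (fun q => f q.1 * g q.2) p) (μ.prod μ) := hfg.indicator hS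
  have h2' : Integrable (fun p : ℝ × ℝ => {p : ℝ × ℝ | p.1 ≤ p.2}.indicator
      (fun q => f q.1 * g q.2) p) (μ.prod μ) := hfg.indicator hS'
  -- the two double integrals
  have I1 : (∫ t, (∫ s in (0:ℝ)..t, f s) * g t ∂μ)
      = ∫ p : ℝ × ℝ, {p : ℝ × ℝ | p.2 ≤ p.1}.indicator (fun q => f q.2 * g q.1) p ∂(μ.prod μ) := by
    have step1 : (∫ t, (∫ s in (0:ℝ)..t, f s) * g t ∂μ)
        = ∫ t, ∫ s, {p : ℝ × ℝ | p.2 ≤ p.1}.indicator (fun q => f q.2 * g q.1) (t, s) ∂μ ∂μ := by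
      rw [hμ]
      refine setIntegral_congr_fun measurableSet_Ioc (fun t ht => ?_)
      rw [hI f t ht, ← integral_mul_const]
      congr 1 with s
      by_cases hs : s ≤ t <;> simp [indicator, hs]
    rw [step1, integral_integral (f := fun t s => {p : ℝ × ℝ | p.2 ≤ p.1}.indicator
      (fun q => f q.2 * g q.1) (t, s)) h1]
  have I2 : (∫ t, f t * (∫ s in (0:ℝ)..t, g s) ∂μ)
      = ∫ p : ℝ × ℝ, {p : ℝ × ℝ | p.2 ≤ p.1}.indicator (fun q => f q.1 * g q.2) p ∂(μ.prod μ) := by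
    have step1 : (∫ t, f t * (∫ s in (0:ℝ)..t, g s) ∂μ)
        = ∫ t, ∫ s, {p : ℝ × ℝ | p.2 ≤ p.1}.indicator (fun q => f q.1 * g q.2) (t, s) ∂μ ∂μ := by
      rw [hμ]
      refine setIntegral_congr_fun measurableSet_Ioc (fun t ht => ?_)
      rw [hI g t ht, ← integral_const_mul]
      congr 1 with s
      by_cases hs : s ≤ t <;> simp [indicator, hs]
    rw [step1, integral_integral (f := fun t s => {p : ℝ × ℝ | p.2 ≤ p.1}.indicator
      (fun q => f q.1 * g q.2) (t, s)) h2]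
  -- swap coordinates in I1
  have I1' : (∫ p : ℝ × ℝ, {p : ℝ × ℝ | p.2 ≤ p.1}.indicator (fun q => f q.2 * g q.1) p ∂(μ.prod μ))
      = ∫ p : ℝ × ℝ, {p : ℝ × ℝ | p.1 ≤ p.2}.indicator (fun q => f q.1 * g q.2) p ∂(μ.prod μ) := by
    rw [← integral_prod_swap (μ := μ) (ν := μ)
      (f := fun p : ℝ × ℝ => {p : ℝ × ℝ | p.2 ≤ p.1}.indicator (fun q => f q.2 * g q.1) p)]
    refine integral_congr_ae (Filter.Eventually.of_forall fun p => ?_)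
    by_cases hp : p.1 ≤ p.2 <;> simp [indicator, Prod.swap, hp]
  -- sum of the two indicators is a.e. the full product
  have key : (∫ t, (∫ s in (0:ℝ)..t, f s) * g t ∂μ) + (∫ t, f t * (∫ s in (0:ℝ)..t, g s) ∂μ)
      = (∫ s, f s ∂μ) * (∫ s, g s ∂μ) := by
    rw [I1, I2, I1', ← integral_add h2' h2, ← integral_prod_mul (μ := μ) (ν := μ) f g]
    refine integral_congr_ae ?_
    filter_upwards [diag_ae (μ := μ)] with p hp
    rcases lt_or_gt_of_ne hp with h | h
    · simp [indicator, h.le, not_le.mpr h]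
    · simp [indicator, h.le, not_le.mpr h]
  -- continuity of primitives
  have hfi : IntervalIntegrable f volume 0 x :=
    (intervalIntegrable_iff_integrableOn_Ioc_of_le hx).2 hf
  have hgi : IntervalIntegrable g volume 0 x :=
    (intervalIntegrable_iff_integrableOn_Ioc_of_le hx).2 hg
  have hFc : ContinuousOn (fun t => a + ∫ s in (0:ℝ)..t, f s) (Icc 0 x) := by
    have := intervalIntegral.continuousOn_primitive_interval'
      (a := 0) (b₁ := 0) (b₂ := x) (μ := volume) (f := f) hfi left_mem_uIcc
    refine continuousOn_const.add (this.mono ?_)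
    rw [uIcc_of_le hx]
  have hGc : ContinuousOn (fun t => b + ∫ s in (0:ℝ)..t, g s) (Icc 0 x) := by
    have := intervalIntegral.continuousOn_primitive_interval'
      (a := 0) (b₁ := 0) (b₂ := x) (μ := volume) (f := g) hgi left_mem_uIcc
    refine continuousOn_const.add (this.mono ?_)
    rw [uIcc_of_le hx]
  have hbdd : ∀ {h : ℝ → 𝕜}, ContinuousOn h (Icc 0 x) →
      ∀ᵐ t ∂μ, ‖h t‖ ≤ sSup ((fun t => ‖h t‖) '' Icc 0 x) := by
    intro h hc
    rw [hμ]
    refine (ae_restrict_iff' measurableSet_Ioc).2 (Filter.Eventually.of_forall fun t ht => ?_)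
    refine le_csSup ?_ ⟨t, Ioc_subset_Icc_self ht, rfl⟩
    exact (isCompact_Icc.image_of_continuousOn hc.norm).bddAbove
  have hFg : Integrable (fun t => (a + ∫ s in (0:ℝ)..t, f s) * g t) μ :=
    hg.bdd_mul ((hFc.mono Ioc_subset_Icc_self).aestronglyMeasurable measurableSet_Ioc)
      (hbdd hFc)
  have hfG : Integrable (fun t => f t * (b + ∫ s in (0:ℝ)..t, g s)) μ := by
    have : Integrable (fun t => (b + ∫ s in (0:ℝ)..t, g s) * f t) μ :=
      hf.bdd_mul ((hGc.mono Ioc_subset_Icc_self).aestronglyMeasurable measurableSet_Ioc)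
        (hbdd hGc)
    simpa [mul_comm] using this
  have hPg : Integrable (fun t => (∫ s in (0:ℝ)..t, f s) * g t) μ := by
    have h0 : (fun t => (∫ s in (0:ℝ)..t, f s) * g t)
        = fun t => (a + ∫ s in (0:ℝ)..t, f s) * g t - a * g t := by
      funext t; ring
    rw [h0]
    exact hFg.sub (hg.const_mul a)
  have hfP : Integrable (fun t => f t * (∫ s in (0:ℝ)..t, g s)) μ := by
    have h0 : (fun t => f t * (∫ s in (0:ℝ)..t, g s))
        = fun t => f t * (b + ∫ s in (0:ℝ)..t, g s) - f t * b := by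
      funext t; ring
    rw [h0]
    exact hfG.sub (hf.mul_const b)
  rw [intervalIntegral.integral_of_le hx, ← hμ, integral_add hFg hfG]
  have expand1 : (∫ t, (a + ∫ s in (0:ℝ)..t, f s) * g t ∂μ)
      = a * (∫ s, g s ∂μ) + ∫ t, (∫ s in (0:ℝ)..t, f s) * g t ∂μ := by
    simp_rw [add_mul]
    rw [integral_add (hg.const_mul a) hPg, integral_const_mul]
  have expand2 : (∫ t, f t * (b + ∫ s in (0:ℝ)..t, g s) ∂μ)
      = (∫ s, f s ∂μ) * b + ∫ t, f t * (∫ s in (0:ℝ)..t, g s) ∂μ := by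
    simp_rw [mul_add]
    rw [integral_add (hf.mul_const b) hfP, integral_mul_const]
  rw [expand1, expand2, intervalIntegral.integral_of_le hx, ← hμ,
    intervalIntegral.integral_of_le hx, ← hμ]
  linear_combination key

/-- continuous on Icc times integrable is integrable. -/
lemma contMulInt {𝕜 : Type*} [RCLike 𝕜] {h f : ℝ → 𝕜} (hh : ContinuousOn h (Icc 0 1))
    (hf : IntegrableOn f (Icc 0 1)) : IntegrableOn (fun t => h t * f t) (Icc (0:ℝ) 1) := by
  refine hf.bdd_mul (c := sSup ((fun t => ‖h t‖) '' Icc 0 1))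
    (hh.aestronglyMeasurable measurableSet_Icc) ?_
  refine (ae_restrict_iff' measurableSet_Icc).2 (Filter.Eventually.of_forall fun t ht => ?_)
  exact le_csSup (isCompact_Icc.image_of_continuousOn hh.norm).bddAbove ⟨t, ht, rfl⟩

lemma intMulCont {𝕜 : Type*} [RCLike 𝕜] {h f : ℝ → 𝕜} (hh : ContinuousOn h (Icc 0 1))
    (hf : IntegrableOn f (Icc 0 1)) : IntegrableOn (fun t => f t * h t) (Icc (0:ℝ) 1) := by
  simpa [mul_comm] using contMulInt hh hf

lemma primCont {𝕜 : Type*} [RCLike 𝕜] {f : ℝ → 𝕜} (hf : IntegrableOn f (Icc 0 1)) :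
    ContinuousOn (fun x => ∫ t in (0:ℝ)..x, f t) (Icc (0:ℝ) 1) := by
  have := intervalIntegral.continuousOn_primitive_interval'
    (a := 0) (b₁ := 0) (b₂ := 1) (μ := volume) (f := f)
    ((intervalIntegrable_iff_integrableOn_Ioc_of_le zero_le_one).2
      (hf.mono_set Ioc_subset_Icc_self)) left_mem_uIcc
  rwa [uIcc_of_le zero_le_one] at this

lemma power_identity {k : ℝ → ℝ} (hk : IntegrableOn k (Icc 0 1)) :
    ∀ m : ℕ, ∀ x ∈ Icc (0:ℝ) 1,
      ((m:ℝ) + 1) * ∫ t in (0:ℝ)..x, k t * (∫ s in (0:ℝ)..t, k s) ^ m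
        = (∫ t in (0:ℝ)..x, k t) ^ (m + 1) := by
  have hKc : ContinuousOn (fun t => ∫ s in (0:ℝ)..t, k s) (Icc 0 1) := primCont hk
  intro m
  induction m with
  | zero => intro x hx; simp
  | succ m ih =>
    intro x hx
    have hfI : IntegrableOn (fun t => ((m:ℝ)+1) * (k t * (∫ s in (0:ℝ)..t, k s) ^ m))
        (Icc 0 1) := by
      have h1 : IntegrableOn (fun t => (∫ s in (0:ℝ)..t, k s) ^ m * k t) (Icc 0 1) :=
        contMulInt (hKc.pow m) hk
      have : (fun t => ((m:ℝ)+1) * (k t * (∫ s in (0:ℝ)..t, k s) ^ m))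
          = fun t => ((m:ℝ)+1) * ((∫ s in (0:ℝ)..t, k s) ^ m * k t) := by
        funext t; ring
      rw [this]
      exact h1.const_mul _
    have hsub : Ioc 0 x ⊆ Icc (0:ℝ) 1 := fun t ht => ⟨ht.1.le, ht.2.trans hx.2⟩
    have key := ibp (f := fun t => ((m:ℝ)+1) * (k t * (∫ s in (0:ℝ)..t, k s) ^ m))
      (g := k) hx.1 (hfI.mono_set hsub) (hk.mono_set hsub) 0 0
    have hprim : ∀ t ∈ Icc (0:ℝ) 1,
        (∫ s in (0:ℝ)..t, ((m:ℝ)+1) * (k s * (∫ u in (0:ℝ)..s, k u) ^ m))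
          = (∫ s in (0:ℝ)..t, k s) ^ (m+1) := by
      intro t ht
      rw [intervalIntegral.integral_const_mul]
      exact ih t ht
    -- rewrite the integrand of `key`
    have hcong : (∫ t in (0:ℝ)..x,
        ((0 + ∫ s in (0:ℝ)..t, ((m:ℝ)+1) * (k s * (∫ u in (0:ℝ)..s, k u) ^ m)) * k t
          + ((m:ℝ)+1) * (k t * (∫ s in (0:ℝ)..t, k s) ^ m) * (0 + ∫ s in (0:ℝ)..t, k s)))
        = ∫ t in (0:ℝ)..x, ((m:ℝ)+2) * (k t * (∫ s in (0:ℝ)..t, k s) ^ (m+1)) := by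
      refine intervalIntegral.integral_congr fun t ht => ?_
      have ht' : t ∈ Icc (0:ℝ) 1 := by
        rw [uIcc_of_le hx.1] at ht
        exact ⟨ht.1, ht.2.trans hx.2⟩
      rw [zero_add, zero_add, hprim t ht']
      ring
    rw [hcong, intervalIntegral.integral_const_mul] at key
    simp only [zero_add] at key
    rw [hprim x hx] at key
    push_cast
    linear_combination key

lemma gronwall {k r : ℝ → ℝ} (hk : IntegrableOn k (Icc 0 1)) (hk0 : ∀ t, 0 ≤ k t)
    (hr : ContinuousOn r (Icc 0 1)) (hr0 : ∀ t ∈ Icc (0:ℝ) 1, 0 ≤ r t)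
    (hineq : ∀ x ∈ Icc (0:ℝ) 1, r x ≤ ∫ t in (0:ℝ)..x, k t * r t) :
    ∀ x ∈ Icc (0:ℝ) 1, r x = 0 := by
  set C := sSup (r '' Icc 0 1) with hCdef
  have hC : ∀ t ∈ Icc (0:ℝ) 1, r t ≤ C := fun t ht =>
    le_csSup (isCompact_Icc.image_of_continuousOn hr).bddAbove ⟨t, ht, rfl⟩
  have hKc : ContinuousOn (fun t => ∫ s in (0:ℝ)..t, k s) (Icc 0 1) := primCont hk
  have claim : ∀ m : ℕ, ∀ x ∈ Icc (0:ℝ) 1,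
      r x ≤ C * (∫ s in (0:ℝ)..x, k s) ^ m / m.factorial := by
    intro m
    induction m with
    | zero => intro x hx; simpa using hC x hx
    | succ m ih =>
      intro x hx
      have hsub : Icc 0 x ⊆ Icc (0:ℝ) 1 := Icc_subset_Icc le_rfl hx.2
      have huIcc : uIcc (0:ℝ) x ⊆ Icc (0:ℝ) 1 := by
        rw [uIcc_of_le hx.1]; exact hsub
      have hkr : IntervalIntegrable (fun t => k t * r t) volume 0 x :=
        ((intMulCont hr hk).mono_set huIcc).intervalIntegrable
      have hkK : IntervalIntegrable (fun t => k t * (C * (∫ s in (0:ℝ)..t, k s) ^ m / m.factorial))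
          volume 0 x := by
        have : IntegrableOn
            (fun t => k t * (C * (∫ s in (0:ℝ)..t, k s) ^ m / m.factorial)) (Icc 0 1) := by
          have h1 := intMulCont (((hKc.pow m).const_smul C).div_const (m.factorial : ℝ)) hk
          simpa [smul_eq_mul] using h1
        exact (this.mono_set huIcc).intervalIntegrable
      have step1 : r x ≤ ∫ t in (0:ℝ)..x, k t * (C * (∫ s in (0:ℝ)..t, k s) ^ m / m.factorial) := by
        refine (hineq x hx).trans ?_
        refine intervalIntegral.integral_mono_on hx.1 hkr hkK fun t ht => ?_
        exact mul_le_mul_of_nonneg_left (ih t (hsub ht)) (hk0 t)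
      have step2 : (∫ t in (0:ℝ)..x, k t * (C * (∫ s in (0:ℝ)..t, k s) ^ m / m.factorial))
          = (C / m.factorial) * ∫ t in (0:ℝ)..x, k t * (∫ s in (0:ℝ)..t, k s) ^ m := by
        rw [← intervalIntegral.integral_const_mul]
        refine intervalIntegral.integral_congr fun t _ => ?_
        ring
      have step3 := power_identity hk m x hx
      rw [step2] at step1
      refine step1.trans_eq ?_
      have hm1 : ((m:ℝ) + 1) ≠ 0 := by positivity
      have : (∫ t in (0:ℝ)..x, k t * (∫ s in (0:ℝ)..t, k s) ^ m)
          = (∫ s in (0:ℝ)..x, k s) ^ (m+1) / ((m:ℝ)+1) := by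
        field_simp
        linarith [step3]
      have hf0 : (m.factorial : ℝ) ≠ 0 := Nat.cast_ne_zero.2 m.factorial_ne_zero
      rw [this, Nat.factorial_succ]
      push_cast
      ring_nf
      rw [show (m.factorial:ℝ) + m.factorial * m = m.factorial * (1 + m) by ring, mul_inv]
      ring
  intro x hx
  refine le_antisymm ?_ (hr0 x hx)
  have hlim : Filter.Tendsto (fun m : ℕ => C * (∫ s in (0:ℝ)..x, k s) ^ m / m.factorial)
      Filter.atTop (nhds 0) := by
    have := FloorSemiring.tendsto_pow_div_factorial_atTop (K := ℝ) (∫ s in (0:ℝ)..x, k s)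
    have h2 := this.const_mul C
    rw [mul_zero] at h2
    refine h2.congr fun m => ?_
    ring
  exact ge_of_tendsto' hlim fun m => claim m x hx

lemma sum_trunc {β : Type*} [AddCommMonoid β] (f : ℕ → β) (m N : ℕ) (h : m + 1 ≤ N) :
    (∑ k ∈ Finset.range N, if k ≤ m then f k else 0) = ∑ k ∈ Finset.range (m+1), f k := by
  rw [← Finset.sum_subset (Finset.range_subset_range.2 h)
    (fun x _ hx' => if_neg (by simpa [Nat.lt_succ_iff] using hx'))]
  exact Finset.sum_congr rfl fun k hk => if_pos (Nat.lt_succ_iff.1 (Finset.mem_range.1 hk))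

/-- Membership in the quasi-differential Sobolev space `W_{s,A}^n[0,1]`. -/
def MemW (A : ℕ → ℕ → ℝ → ℂ) (s : ℝ) (n : ℕ) (Y : ℕ → ℝ → ℂ) : Prop :=
  (∀ i < n, ContinuousOn (Y i) (Set.Icc 0 1)) ∧
  AEMeasurable (Y n) (volume.restrict (Set.Icc 0 1)) ∧
  IntegrableOn (fun x => ‖A (n-1) n x‖ * ‖Y n x‖ ^ s) (Set.Icc 0 1) ∧
  (∀ i < n, IntegrableOn (fun t => ∑ j ∈ Finset.range (i+2), A i j t * Y j t) (Set.Icc 0 1)) ∧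
  (∀ i < n, ∀ x ∈ Set.Icc (0:ℝ) 1,
    Y i x = Y i 0 + ∫ t in (0:ℝ)..x, ∑ j ∈ Finset.range (i+2), A i j t * Y j t)

/-- The truncated coefficient matrix `ã`. -/
def Atld (n : ℕ) (A : ℕ → ℕ → ℝ → ℂ) (i k : Fin n) : ℝ → ℂ :=
  if (k : ℕ) ≤ min (n - 1) ((i : ℕ) + 1) then A i k else 0

/-- `M` is the absolutely continuous matrix solution of `M' = ã·M` a.e. with `M 0 = Id`. -/
def ACsol (n : ℕ) (A : ℕ → ℕ → ℝ → ℂ) (M : ℝ → Matrix (Fin n) (Fin n) ℂ) : Prop :=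
  M 0 = 1 ∧
  (∀ i j : Fin n, ContinuousOn (fun x => M x i j) (Set.Icc 0 1)) ∧
  (∀ i j : Fin n,
    IntegrableOn (fun t => ∑ k : Fin n, Atld n A i k t * M t k j) (Set.Icc 0 1)) ∧
  (∀ i j : Fin n, ∀ x ∈ Set.Icc (0:ℝ) 1,
    M x i j = M 0 i j + ∫ t in (0:ℝ)..x, ∑ k : Fin n, Atld n A i k t * M t k j)

theorem stmt2 (n : ℕ) (hn : 1 ≤ n) (A : ℕ → ℕ → ℝ → ℂ)
    (hA : ∀ i j, IntegrableOn (A i j) (Set.Icc 0 1))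
    (M : ℝ → Matrix (Fin n) (Fin n) ℂ) (hM : ACsol n A M)
    (hMinv : ∀ x ∈ Set.Icc (0:ℝ) 1, IsUnit (M x))
    (Y : ℕ → ℝ → ℂ) (hY : MemW A 1 n Y) :
    ∀ i : Fin n, ∀ x ∈ Set.Icc (0:ℝ) 1,
      Y i x = ∑ j : Fin n, M x i j *
        (Y j 0 + ∫ t in (0:ℝ)..x,
          A (n-1) n t * (M t)⁻¹ j ⟨n-1, by omega⟩ * Y n t) := by
  obtain ⟨hYc, hYm, hYint, hYsum, hYeq⟩ := hY
  obtain ⟨hM0, hMc, hMint, hMeq⟩ := hM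
  set l : Fin n := ⟨n-1, by omega⟩ with hl
  -- (a) integrability of the inhomogeneity
  have hq : IntegrableOn (fun t => A (n-1) n t * Y n t) (Icc (0:ℝ) 1) := by
    have hAnm : AEStronglyMeasurable (A (n-1) n) (volume.restrict (Icc (0:ℝ) 1)) :=
      (hA _ _).1
    have hYnm : AEStronglyMeasurable (Y n) (volume.restrict (Icc (0:ℝ) 1)) :=
      hYm.aestronglyMeasurable
    refine Integrable.mono' hYint (hAnm.mul hYnm)
      (Filter.Eventually.of_forall fun t => ?_)
    rw [norm_mul, Real.rpow_one]
  -- (b) continuity of M, det, inverse entries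
  have hMcont : ContinuousOn (fun x => M x) (Icc (0:ℝ) 1) :=
    continuousOn_pi.2 fun i => continuousOn_pi.2 fun j => hMc i j
  have hdet : ContinuousOn (fun x => (M x).det) (Icc (0:ℝ) 1) :=
    (continuous_id.matrix_det).comp_continuousOn hMcont
  have hdetne : ∀ x ∈ Icc (0:ℝ) 1, (M x).det ≠ 0 := fun x hx' =>
    ((Matrix.isUnit_iff_isUnit_det _).1 (hMinv x hx')).ne_zero
  have hInvc : ∀ j k : Fin n, ContinuousOn (fun x => (M x)⁻¹ j k) (Icc (0:ℝ) 1) := by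
    intro j k
    have heq : ∀ x : ℝ, (M x)⁻¹ j k = ((M x).det)⁻¹ * (M x).adjugate j k := by
      intro x
      rw [Matrix.inv_def, Ring.inverse_eq_inv']
      rfl
    simp_rw [heq]
    refine (hdet.inv₀ hdetne).mul ?_
    exact ((continuous_apply k).comp ((continuous_apply j).comp
      continuous_id.matrix_adjugate)).comp_continuousOn hMcont
  -- (c) integrability of the c-integrands
  have hqj : ∀ j : Fin n,
      IntegrableOn (fun t => A (n-1) n t * (M t)⁻¹ j l * Y n t) (Icc (0:ℝ) 1) := by
    intro j
    have h1 := contMulInt (hInvc j l) hq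
    have h2 : (fun t => A (n-1) n t * (M t)⁻¹ j l * Y n t)
        = fun t => (M t)⁻¹ j l * (A (n-1) n t * Y n t) := by funext t; ring
    rw [h2]; exact h1
  -- (d) the c functions
  set c : Fin n → ℝ → ℂ := fun j x =>
    Y j 0 + ∫ t in (0:ℝ)..x, A (n-1) n t * (M t)⁻¹ j l * Y n t with hcdef
  have hcc : ∀ j, ContinuousOn (c j) (Icc (0:ℝ) 1) := fun j =>
    continuousOn_const.add (primCont (hqj j))
  -- (e) the u function
  set u : ℝ → Fin n → ℂ := fun x k => ∑ j, M x k j * c j x with hudef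
  have huc : ∀ k : Fin n, ContinuousOn (fun x => u x k) (Icc (0:ℝ) 1) := fun k =>
    continuousOn_finset_sum _ fun j _ => (hMc k j).mul (hcc j)
  have hmulinv : ∀ t ∈ Icc (0:ℝ) 1, M t * (M t)⁻¹ = 1 := fun t ht =>
    Matrix.mul_nonsing_inv _ ((Matrix.isUnit_iff_isUnit_det _).1 (hMinv t ht))
  -- (f) integral equation for u
  have hu_eq : ∀ (i : Fin n), ∀ x ∈ Icc (0:ℝ) 1,
      u x i = Y i 0 + ∫ t in (0:ℝ)..x,
        (∑ k : Fin n, Atld n A i k t * u t k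
          + if i = l then A (n-1) n t * Y n t else 0) := by
    intro i x hx
    have hIoc : Ioc (0:ℝ) x ⊆ Icc 0 1 := fun t ht => ⟨ht.1.le, ht.2.trans hx.2⟩
    have huIcc : uIcc (0:ℝ) x ⊆ Icc 0 1 := by
      rw [uIcc_of_le hx.1]; exact Icc_subset_Icc le_rfl hx.2
    have pair : ∀ j : Fin n,
        (∫ t in (0:ℝ)..x, (M t i j * (A (n-1) n t * (M t)⁻¹ j l * Y n t)
            + (∑ k : Fin n, Atld n A i k t * M t k j) * c j t))
          = M x i j * c j x - M 0 i j * Y j 0 := by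
      intro j
      have key := ibp hx.1 ((hMint i j).mono_set hIoc) ((hqj j).mono_set hIoc)
        (M 0 i j) (Y j 0)
      calc (∫ t in (0:ℝ)..x, (M t i j * (A (n-1) n t * (M t)⁻¹ j l * Y n t)
              + (∑ k : Fin n, Atld n A i k t * M t k j) * c j t))
          = ∫ t in (0:ℝ)..x,
              ((M 0 i j + ∫ s in (0:ℝ)..t, ∑ k : Fin n, Atld n A i k s * M s k j)
                  * (A (n-1) n t * (M t)⁻¹ j l * Y n t)
                + (∑ k : Fin n, Atld n A i k t * M t k j)
                  * (Y j 0 + ∫ s in (0:ℝ)..t, A (n-1) n s * (M s)⁻¹ j l * Y n s)) := by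
            refine intervalIntegral.integral_congr fun t ht => ?_
            rw [← hMeq i j t (huIcc ht)]
        _ = (M 0 i j + ∫ s in (0:ℝ)..x, ∑ k : Fin n, Atld n A i k s * M s k j)
              * (Y j 0 + ∫ s in (0:ℝ)..x, A (n-1) n s * (M s)⁻¹ j l * Y n s)
              - M 0 i j * Y j 0 := key
        _ = M x i j * c j x - M 0 i j * Y j 0 := by rw [← hMeq i j x hx]
    have hItot : ∀ j : Fin n, IntervalIntegrable
        (fun t => M t i j * (A (n-1) n t * (M t)⁻¹ j l * Y n t)
          + (∑ k : Fin n, Atld n A i k t * M t k j) * c j t) volume 0 x := by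
      intro j
      have h1 := contMulInt (hMc i j) (hqj j)
      have h2 := intMulCont (hcc j) (hMint i j)
      have h3 : IntegrableOn (fun t => M t i j * (A (n-1) n t * (M t)⁻¹ j l * Y n t)
          + (∑ k : Fin n, Atld n A i k t * M t k j) * c j t) (Icc (0:ℝ) 1) := h1.add h2
      exact (h3.mono_set huIcc).intervalIntegrable
    have hsum := intervalIntegral.integral_finset_sum (μ := volume) (a := (0:ℝ)) (b := x)
      (s := Finset.univ)
      (f := fun (j : Fin n) t => M t i j * (A (n-1) n t * (M t)⁻¹ j l * Y n t)
        + (∑ k : Fin n, Atld n A i k t * M t k j) * c j t) (fun j _ => hItot j)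
    have hRHS : ∑ j : Fin n, (M x i j * c j x - M 0 i j * Y j 0) = u x i - Y i 0 := by
      rw [Finset.sum_sub_distrib]
      congr 1
      rw [hM0]
      simp [Matrix.one_apply]
    have big : (∫ t in (0:ℝ)..x, ∑ j : Fin n,
        (M t i j * (A (n-1) n t * (M t)⁻¹ j l * Y n t)
          + (∑ k : Fin n, Atld n A i k t * M t k j) * c j t)) = u x i - Y i 0 := by
      rw [hsum, Finset.sum_congr rfl fun j _ => pair j]
      exact hRHS
    have hintegrand : ∀ t ∈ Icc (0:ℝ) 1,
        (∑ j : Fin n, (M t i j * (A (n-1) n t * (M t)⁻¹ j l * Y n t)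
            + (∑ k : Fin n, Atld n A i k t * M t k j) * c j t))
          = ∑ k : Fin n, Atld n A i k t * u t k
            + (if i = l then A (n-1) n t * Y n t else 0) := by
      intro t ht
      rw [Finset.sum_add_distrib, add_comm]
      congr 1
      · -- ∑ j (∑ k Atld * M) * c = ∑ k Atld * u
        simp only [Finset.sum_mul]
        rw [Finset.sum_comm]
        refine Finset.sum_congr rfl fun k _ => ?_
        rw [Finset.mul_sum]
        exact Finset.sum_congr rfl fun j _ => by ring
      · -- ∑ j M i j * (A * inv j l * Yn) = ite
        have hA1 : (∑ j : Fin n, M t i j * (A (n-1) n t * (M t)⁻¹ j l * Y n t))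
            = (∑ j : Fin n, M t i j * (M t)⁻¹ j l) * (A (n-1) n t * Y n t) := by
          rw [Finset.sum_mul]
          exact Finset.sum_congr rfl fun j _ => by ring
        have hA2 : (∑ j : Fin n, M t i j * (M t)⁻¹ j l)
            = (1 : Matrix (Fin n) (Fin n) ℂ) i l := by
          rw [← hmulinv t ht, Matrix.mul_apply]
        rw [hA1, hA2, Matrix.one_apply]
        by_cases hil : i = l <;> simp [hil]
    rw [intervalIntegral.integral_congr (fun t ht => hintegrand t (huIcc ht))] at big
    linear_combination -big
  -- (g) rewriting the Y-equation with the truncated matrix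
  have hsum_split : ∀ (i : Fin n) (t : ℝ),
      (∑ j ∈ Finset.range ((i:ℕ)+2), A i j t * Y j t)
        = ∑ k : Fin n, Atld n A i k t * Y k t
          + (if i = l then A (n-1) n t * Y n t else 0) := by
    intro i t
    have hfin : ∑ k : Fin n, Atld n A i k t * Y k t
        = ∑ k ∈ Finset.range n,
            (if k ≤ min (n-1) ((i:ℕ)+1) then A i k t * Y k t else 0) := by
      rw [← Fin.sum_univ_eq_sum_range
        (fun k => if k ≤ min (n-1) ((i:ℕ)+1) then A i k t * Y k t else 0) n]
      exact Finset.sum_congr rfl fun k _ => by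
        simp only [Atld]
        split_ifs <;> simp
    have hmle : min (n-1) ((i:ℕ)+1) + 1 ≤ n := by
      have := min_le_left (n-1) ((i:ℕ)+1); omega
    rw [hfin, sum_trunc _ _ _ hmle]
    have hil : (i = l) ↔ ((i:ℕ) = n - 1) := by
      rw [Fin.ext_iff]
    by_cases hni : (i:ℕ) + 2 ≤ n
    · have hmin : min (n-1) ((i:ℕ)+1) = (i:ℕ)+1 := min_eq_right (by omega)
      have : ¬ (i = l) := by rw [hil]; omega
      rw [if_neg this, hmin, add_zero]
    · have hi1 : (i:ℕ) = n - 1 := by have := i.2; omega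
      have hmin : min (n-1) ((i:ℕ)+1) = n-1 := min_eq_left (by omega)
      rw [hmin, if_pos (hil.2 hi1)]
      have hrange : (i:ℕ) + 2 = (n - 1 + 1) + 1 := by omega
      rw [hrange, Finset.sum_range_succ]
      have hsucc : n - 1 + 1 = n := by omega
      rw [hsucc, hi1]
  have hY_eq : ∀ (i : Fin n), ∀ x ∈ Icc (0:ℝ) 1,
      Y i x = Y i 0 + ∫ t in (0:ℝ)..x,
        (∑ k : Fin n, Atld n A i k t * Y k t
          + if i = l then A (n-1) n t * Y n t else 0) := by
    intro i x hx
    rw [hYeq i i.2 x hx,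
      intervalIntegral.integral_congr (fun t _ => hsum_split i t)]
  -- (h) integrability bookkeeping
  have hqint : ∀ i : Fin n,
      IntegrableOn (fun t => if i = l then A (n-1) n t * Y n t else 0) (Icc (0:ℝ) 1) := by
    intro i
    by_cases hil : i = l
    · simpa [hil] using hq
    · simp [hil]
  have hNint1 : ∀ i : Fin n,
      IntegrableOn (fun t => ∑ k : Fin n, Atld n A i k t * Y k t) (Icc (0:ℝ) 1) := by
    intro i
    have h0 : (fun t => ∑ k : Fin n, Atld n A i k t * Y k t)
        = fun t => (∑ j ∈ Finset.range ((i:ℕ)+2), A i j t * Y j t)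
            - (if i = l then A (n-1) n t * Y n t else 0) := by
      funext t; rw [hsum_split i t]; ring
    rw [h0]
    exact (hYsum i i.2).sub (hqint i)
  have hAtldint : ∀ i k : Fin n, IntegrableOn (Atld n A i k) (Icc (0:ℝ) 1) := by
    intro i k
    unfold Atld
    split_ifs
    · exact hA _ _
    · exact integrableOn_zero
  have hNint2 : ∀ i : Fin n,
      IntegrableOn (fun t => ∑ k : Fin n, Atld n A i k t * u t k) (Icc (0:ℝ) 1) :=
    fun i => integrable_finset_sum _ fun k _ => intMulCont (huc k) (hAtldint i k)
  have hNkint : ∀ i : Fin n,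
      IntegrableOn (fun t => ∑ k : Fin n, Atld n A i k t * (Y k t - u t k)) (Icc (0:ℝ) 1) := by
    intro i
    have h0 : (fun t => ∑ k : Fin n, Atld n A i k t * (Y k t - u t k))
        = fun t => (∑ k : Fin n, Atld n A i k t * Y k t)
            - ∑ k : Fin n, Atld n A i k t * u t k := by
      funext t
      simp [mul_sub, Finset.sum_sub_distrib]
    rw [h0]
    exact (hNint1 i).sub (hNint2 i)
  -- (i) the difference satisfies a homogeneous equation
  have hN_eq : ∀ (i : Fin n), ∀ x ∈ Icc (0:ℝ) 1,
      Y i x - u x i = ∫ t in (0:ℝ)..x,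
        ∑ k : Fin n, Atld n A i k t * (Y k t - u t k) := by
    intro i x hx
    have huIcc : uIcc (0:ℝ) x ⊆ Icc 0 1 := by
      rw [uIcc_of_le hx.1]; exact Icc_subset_Icc le_rfl hx.2
    have hi1 : IntervalIntegrable (fun t => ∑ k : Fin n, Atld n A i k t * Y k t
        + if i = l then A (n-1) n t * Y n t else 0) volume 0 x := by
      have h3 : IntegrableOn (fun t => ∑ k : Fin n, Atld n A i k t * Y k t
          + if i = l then A (n-1) n t * Y n t else 0) (Icc (0:ℝ) 1) :=
        (hNint1 i).add (hqint i)
      exact (h3.mono_set huIcc).intervalIntegrable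
    have hi2 : IntervalIntegrable (fun t => ∑ k : Fin n, Atld n A i k t * u t k
        + if i = l then A (n-1) n t * Y n t else 0) volume 0 x := by
      have h3 : IntegrableOn (fun t => ∑ k : Fin n, Atld n A i k t * u t k
          + if i = l then A (n-1) n t * Y n t else 0) (Icc (0:ℝ) 1) :=
        (hNint2 i).add (hqint i)
      exact (h3.mono_set huIcc).intervalIntegrable
    rw [hY_eq i x hx, hu_eq i x hx, add_sub_add_left_eq_sub,
      ← intervalIntegral.integral_sub hi1 hi2]
    refine intervalIntegral.integral_congr fun t _ => ?_
    simp [mul_sub, Finset.sum_sub_distrib]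
  -- (j) Grönwall
  have hκint : IntegrableOn (fun t => ∑ i : Fin n, ∑ k : Fin n, ‖Atld n A i k t‖)
      (Icc (0:ℝ) 1) :=
    integrable_finset_sum _ fun i _ => integrable_finset_sum _ fun k _ => (hAtldint i k).norm
  have hκ0 : ∀ t, (0:ℝ) ≤ ∑ i : Fin n, ∑ k : Fin n, ‖Atld n A i k t‖ := fun t =>
    Finset.sum_nonneg fun _ _ => Finset.sum_nonneg fun _ _ => norm_nonneg _
  have hrc : ContinuousOn (fun t => ∑ k : Fin n, ‖Y k t - u t k‖) (Icc (0:ℝ) 1) :=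
    continuousOn_finset_sum _ fun k _ => ((hYc k k.2).sub (huc k)).norm
  have hr0 : ∀ t ∈ Icc (0:ℝ) 1, (0:ℝ) ≤ ∑ k : Fin n, ‖Y k t - u t k‖ := fun t _ =>
    Finset.sum_nonneg fun _ _ => norm_nonneg _
  have hbnd_int : ∀ i : Fin n, IntegrableOn
      (fun t => ∑ k : Fin n, ‖Atld n A i k t‖ * ‖Y k t - u t k‖) (Icc (0:ℝ) 1) :=
    fun i => integrable_finset_sum _ fun k _ =>
      intMulCont (((hYc k k.2).sub (huc k)).norm) ((hAtldint i k).norm)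
  have hκr_int : IntegrableOn (fun t =>
      (∑ i : Fin n, ∑ k : Fin n, ‖Atld n A i k t‖) * (∑ k : Fin n, ‖Y k t - u t k‖))
      (Icc (0:ℝ) 1) := intMulCont hrc hκint
  have hineq : ∀ x ∈ Icc (0:ℝ) 1, (∑ k : Fin n, ‖Y k x - u x k‖)
      ≤ ∫ t in (0:ℝ)..x,
        (∑ i : Fin n, ∑ k : Fin n, ‖Atld n A i k t‖) * (∑ k : Fin n, ‖Y k t - u t k‖) := by
    intro x hx
    have huIcc : uIcc (0:ℝ) x ⊆ Icc 0 1 := by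
      rw [uIcc_of_le hx.1]; exact Icc_subset_Icc le_rfl hx.2
    calc (∑ k : Fin n, ‖Y k x - u x k‖)
        = ∑ i : Fin n, ‖∫ t in (0:ℝ)..x, ∑ k : Fin n, Atld n A i k t * (Y k t - u t k)‖ :=
          Finset.sum_congr rfl fun i _ => by rw [← hN_eq i x hx]
      _ ≤ ∑ i : Fin n, ∫ t in (0:ℝ)..x, ∑ k : Fin n, ‖Atld n A i k t‖ * ‖Y k t - u t k‖ := by
          refine Finset.sum_le_sum fun i _ => ?_
          refine (intervalIntegral.norm_integral_le_integral_norm hx.1).trans ?_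
          refine intervalIntegral.integral_mono_on hx.1 ?_ ?_ fun t _ => ?_
          · have hni' : IntegrableOn
                (fun t => ‖∑ k : Fin n, Atld n A i k t * (Y k t - u t k)‖) (Icc (0:ℝ) 1) :=
              (hNkint i).norm
            exact (hni'.mono_set huIcc).intervalIntegrable
          · exact ((hbnd_int i).mono_set huIcc).intervalIntegrable
          · refine (norm_sum_le _ _).trans ?_
            exact Finset.sum_le_sum fun k _ => by rw [norm_mul]
      _ = ∫ t in (0:ℝ)..x, ∑ i : Fin n, ∑ k : Fin n, ‖Atld n A i k t‖ * ‖Y k t - u t k‖ :=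
          (intervalIntegral.integral_finset_sum fun i _ =>
            ((hbnd_int i).mono_set huIcc).intervalIntegrable).symm
      _ ≤ _ := by
          refine intervalIntegral.integral_mono_on hx.1 ?_ ?_ fun t _ => ?_
          · have htot : IntegrableOn
                (fun t => ∑ i : Fin n, ∑ k : Fin n, ‖Atld n A i k t‖ * ‖Y k t - u t k‖)
                (Icc (0:ℝ) 1) := integrable_finset_sum _ fun i _ => hbnd_int i
            exact (htot.mono_set huIcc).intervalIntegrable
          · exact (hκr_int.mono_set huIcc).intervalIntegrable
          · calc (∑ i : Fin n, ∑ k : Fin n, ‖Atld n A i k t‖ * ‖Y k t - u t k‖)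
                ≤ ∑ i : Fin n, ∑ k : Fin n, ‖Atld n A i k t‖ * (∑ k' : Fin n, ‖Y k' t - u t k'‖) := by
                  refine Finset.sum_le_sum fun i _ => Finset.sum_le_sum fun k _ => ?_
                  exact mul_le_mul_of_nonneg_left
                    (Finset.single_le_sum (f := fun k' : Fin n => ‖Y k' t - u t k'‖)
                      (fun k' _ => norm_nonneg _) (Finset.mem_univ k))
                    (norm_nonneg _)
              _ = (∑ i : Fin n, ∑ k : Fin n, ‖Atld n A i k t‖)
                    * (∑ k : Fin n, ‖Y k t - u t k‖) := by
                  rw [Finset.sum_mul]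
                  exact Finset.sum_congr rfl fun i _ => (Finset.sum_mul _ _ _).symm
  have hrzero := gronwall hκint hκ0 hrc hr0 hineq
  intro i x hx
  have h1 : Y i x - u x i = 0 := by
    have h2 := hrzero x hx
    have hle : ‖Y i x - u x i‖ ≤ ∑ k : Fin n, ‖Y k x - u x k‖ :=
      Finset.single_le_sum (f := fun k : Fin n => ‖Y k x - u x k‖)
        (fun k _ => norm_nonneg _) (Finset.mem_univ i)
    have : ‖Y i x - u x i‖ = 0 := le_antisymm (by rw [← h2]; exact hle) (norm_nonneg _)
    exact norm_eq_zero.1 this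
  have h3 : Y i x = u x i := sub_eq_zero.1 h1
  rw [h3]
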